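/- The map τ fixes the class of 0 in ℂ/Λ, and there is no bijection h : ℂ/Λ → ℂ/Λ satisfying h ∘ σ = τ ∘ h. (In the paper this shows that the genus-one real curve (ℂ/Λ, σ), which has no real points, is not isomorphic to its Jacobian Pic⁰, whose real structure is induced by τ and which has the real point 0; hence the Torelli theorem fails for real curves of genus one.) -/

import Mathlib

lemma re_int_of_mem (a : ℝ) (w : ℂ)
    (hw : w ∈ AddSubgroup.closure {1, (a : ℂ) * Complex.I}) :
    ∃ m : ℤ, w.re = m := by
  induction hw using AddSubgroup.closure_induction with
  | mem x hx =>
    rcases hx with h | h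
    · exact ⟨1, by simp [h]⟩
    · rw [Set.mem_singleton_iff] at h; exact ⟨0, by simp [h]⟩
  | zero => exact ⟨0, by simp⟩
  | add x y _ _ hx hy =>
    obtain ⟨m, hm⟩ := hx; obtain ⟨n, hn⟩ := hy
    exact ⟨m + n, by simp [Complex.add_re, hm, hn]⟩
  | neg x _ hx =>
    obtain ⟨m, hm⟩ := hx
    exact ⟨-m, by simp [Complex.neg_re, hm]⟩

theorem real_torelli_fails_genus_one (a : ℝ) (ha : 0 < a)
    (Λ : AddSubgroup ℂ) (hΛ : Λ = AddSubgroup.closure {1, (a : ℂ) * Complex.I})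
    (f : ℂ → ℂ) (hf : ∀ z : ℂ, f z = (starRingEnd ℂ) z + 1 / 2)
    (σ : ℂ ⧸ Λ → ℂ ⧸ Λ)
    (hσ : ∀ z : ℂ, σ (QuotientAddGroup.mk z) = QuotientAddGroup.mk (f z))
    (τ : ℂ ⧸ Λ → ℂ ⧸ Λ)
    (hτ : ∀ z : ℂ, τ (QuotientAddGroup.mk z) = QuotientAddGroup.mk ((starRingEnd ℂ) z)) :
    τ 0 = 0 ∧ ¬ ∃ h : ℂ ⧸ Λ → ℂ ⧸ Λ, Function.Bijective h ∧ h ∘ σ = τ ∘ h := by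
  have hτ0 : τ 0 = 0 := by
    have : ((0 : ℂ ⧸ Λ)) = QuotientAddGroup.mk (0 : ℂ) := rfl
    rw [this, hτ]
    simp
  refine ⟨hτ0, ?_⟩
  rintro ⟨h, ⟨hinj, hsurj⟩, hcomm⟩
  obtain ⟨y, hy⟩ := hsurj 0
  have h1 : h (σ y) = h y := by
    have := congrFun hcomm y
    simp only [Function.comp_apply] at this
    rw [this, hy, hτ0]
  have h2 : σ y = y := hinj h1
  obtain ⟨z, rfl⟩ := QuotientAddGroup.mk_surjective y
  rw [hσ] at h2
  rw [QuotientAddGroup.eq] at h2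
  have hre : ∃ m : ℤ, (-(f z) + z).re = m := re_int_of_mem a _ (hΛ ▸ h2)
  obtain ⟨m, hm⟩ := hre
  rw [hf] at hm
  simp [Complex.add_re, Complex.neg_re, Complex.conj_re] at hm
  have : (m : ℝ) = -(1/2 : ℝ) := by linarith [hm]
  have h12 : ((2 : ℤ) : ℝ) * m = -1 := by push_cast; linarith
  have : (2 * m : ℤ) = -1 := by exact_mod_cast (by push_cast; linarith : ((2*m : ℤ) : ℝ) = ((-1 : ℤ) : ℝ))
  omega
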